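/- Let λ₁,...,λ_l be distinct real numbers with positive integer multiplicities m₁,...,m_l, and let ψ, c̄ be real numbers. Suppose for each i the identity ∑_{j≠i} m_j (c̄ + 2λ_iλ_j + ψ(λ_i+λ_j))/(λ_i − λ_j) = 0 holds (the Cartan identity for null screen isoparametric hypersurfaces). If c̄ = 0 and ψ = 0 and l ≥ 2, then l = 2 and one of the λ_i equals zero. -/

import Mathlib

/-- At the minimal positive curvature, the flat Cartan identity forces all
other curvatures to vanish. -/
lemma aux1 (l : ℕ) (lam : Fin l → ℝ) (m : Fin l → ℕ)
    (hdist : Function.Injective lam) (hm : ∀ i, 0 < m i)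
    (hC : ∀ i : Fin l, ∑ j ∈ Finset.univ.erase i,
      (m j : ℝ) * (2 * lam i * lam j) / (lam i - lam j) = 0)
    (hex : ∃ i, 0 < lam i) : ∃ i₀, ∀ j, j ≠ i₀ → lam j = 0 := by
  classical
  obtain ⟨a, ha⟩ := hex
  have hS : (Finset.univ.filter fun j => 0 < lam j).Nonempty :=
    ⟨a, by simp [ha]⟩
  obtain ⟨i₀, hi₀S, hmin⟩ := Finset.exists_min_image _ lam hS
  have hpos : 0 < lam i₀ := (Finset.mem_filter.mp hi₀S).2
  refine ⟨i₀, fun j hj => ?_⟩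
  have hterms : ∀ j ∈ Finset.univ.erase i₀,
      (m j : ℝ) * (2 * lam i₀ * lam j) / (lam i₀ - lam j) ≤ 0 := by
    intro j hj'
    have hjne : j ≠ i₀ := (Finset.mem_erase.mp hj').1
    have hne : lam j ≠ lam i₀ := fun h => hjne (hdist h)
    have hmj : (0:ℝ) < (m j : ℝ) := by exact_mod_cast hm j
    rcases le_or_gt (lam j) 0 with h | h
    · apply div_nonpos_of_nonpos_of_nonneg
      · nlinarith [mul_nonpos_of_nonneg_of_nonpos hpos.le h]
      · nlinarith
    · have hgt : lam i₀ < lam j := by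
        have := hmin j (by simp [h])
        exact lt_of_le_of_ne this (fun e => hne (e.symm))
      apply div_nonpos_of_nonneg_of_nonpos
      · nlinarith [mul_pos hpos h]
      · linarith
  have hz := (Finset.sum_eq_zero_iff_of_nonpos hterms).mp (hC i₀) j
    (Finset.mem_erase.mpr ⟨hj, Finset.mem_univ j⟩)
  have hne : lam i₀ - lam j ≠ 0 := by
    have : lam j ≠ lam i₀ := fun h => hj (hdist h)
    intro h; apply this; linarith [sub_eq_zero.mp h]
  have hmj : (0:ℝ) < (m j : ℝ) := by exact_mod_cast hm j
  rcases div_eq_zero_iff.mp hz with h | h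
  · rcases mul_eq_zero.mp h with h' | h'
    · exact absurd h' (ne_of_gt hmj)
    · nlinarith
  · exact absurd h hne

/-- Counting: if all curvatures except one vanish and they are distinct, l = 2. -/
lemma aux2 (l : ℕ) (lam : Fin l → ℝ) (hdist : Function.Injective lam)
    (hl : 2 ≤ l) (i₀ : Fin l) (hall : ∀ j, j ≠ i₀ → lam j = 0) :
    l = 2 ∧ ∃ i : Fin l, lam i = 0 := by
  classical
  have hcard : (Finset.univ.erase i₀).card = l - 1 := by
    simp [Finset.card_erase_of_mem]
  have hne : (Finset.univ.erase i₀).Nonempty := by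
    rw [← Finset.card_pos, hcard]; omega
  obtain ⟨j, hj⟩ := hne
  have hjne : j ≠ i₀ := (Finset.mem_erase.mp hj).1
  constructor
  · by_contra h
    have h3 : 3 ≤ l := by omega
    have h2 : 2 ≤ (Finset.univ.erase i₀).card := by omega
    obtain ⟨x, hx, y, hy, hxy⟩ := Finset.one_lt_card.mp h2
    have hx0 : lam x = 0 := hall x (Finset.mem_erase.mp hx).1
    have hy0 : lam y = 0 := hall y (Finset.mem_erase.mp hy).1
    exact hxy (hdist (hx0.trans hy0.symm))
  · exact ⟨j, hall j hjne⟩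

/-- Cartan identities in the flat case (c̄ = 0, ψ = 0) force at most two
distinct screen principal curvatures, one of them zero. -/
theorem stmt0 (l : ℕ) (lam : Fin l → ℝ) (m : Fin l → ℕ)
    (hdist : Function.Injective lam) (hm : ∀ i, 0 < m i)
    (cbar psi : ℝ)
    (hcartan : ∀ i : Fin l, ∑ j ∈ Finset.univ.erase i,
      (m j : ℝ) * (cbar + 2 * lam i * lam j + psi * (lam i + lam j)) / (lam i - lam j) = 0)
    (hc : cbar = 0) (hpsi : psi = 0) (hl : 2 ≤ l) :
    l = 2 ∧ ∃ i : Fin l, lam i = 0 := by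
  classical
  subst hc hpsi
  have hC : ∀ i : Fin l, ∑ j ∈ Finset.univ.erase i,
      (m j : ℝ) * (2 * lam i * lam j) / (lam i - lam j) = 0 := by
    intro i
    have := hcartan i
    simpa using this
  -- there is a nonzero curvature
  have i0 : Fin l := ⟨0, by omega⟩
  have i1 : Fin l := ⟨1, by omega⟩
  have hne01 : (⟨0, by omega⟩ : Fin l) ≠ ⟨1, by omega⟩ := by
    intro h; simpa using congrArg Fin.val h
  have hexne : ∃ i, lam i ≠ 0 := by
    by_contra h
    push_neg at h
    exact hne01 (hdist ((h _).trans (h _).symm))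
  obtain ⟨a, ha⟩ := hexne
  rcases ha.lt_or_gt with hneg | hpos
  · -- apply aux1 to -lam
    have hdist' : Function.Injective (fun j => -lam j) := fun x y h => by
      apply hdist; have : -lam x = -lam y := h; linarith
    have hC' : ∀ i : Fin l, ∑ j ∈ Finset.univ.erase i,
        (m j : ℝ) * (2 * (-lam i) * (-lam j)) / ((-lam i) - (-lam j)) = 0 := by
      intro i
      have := hC i
      have : -∑ j ∈ Finset.univ.erase i,
          (m j : ℝ) * (2 * lam i * lam j) / (lam i - lam j) = 0 := by rw [this]; ring
      rw [← this, ← Finset.sum_neg_distrib]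
      apply Finset.sum_congr rfl
      intro j _
      rw [show (↑(m j) : ℝ) * (2 * (-lam i) * (-lam j)) = ↑(m j) * (2 * lam i * lam j) from by
            ring,
        show (-lam i) - (-lam j) = -(lam i - lam j) from by ring, div_neg]
    obtain ⟨i₀, hall⟩ := aux1 l (fun j => -lam j) m hdist' hm hC' ⟨a, by simpa using hneg⟩
    exact aux2 l lam hdist hl i₀ (fun j hj => by have := hall j hj; simpa using this)
  · obtain ⟨i₀, hall⟩ := aux1 l lam m hdist hm hC ⟨a, hpos⟩
    exact aux2 l lam hdist hl i₀ hall
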